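/- arXiv:1112.2420 — 4 statements merged into one kernel-verified Lean document; each statement's English description precedes it below -/
import Mathlib

section
/- Let Λ ⊆ ℂ be open and let U¹, U², Φ : ℝ² × Λ → Matrix (Fin N) (Fin N) ℂ be twice continuously differentiable with Φ(ξ₁, ξ₂, λ) invertible everywhere, and suppose the linear spectral problem ∂Φ/∂ξ₁ = U¹·Φ and ∂Φ/∂ξ₂ = U²·Φ holds for all (ξ₁, ξ₂, λ). Then the Sym–Tafel immersion F^{ST} := Φ⁻¹·(∂Φ/∂λ) satisfies ∂F^{ST}/∂ξ₁ = Φ⁻¹·(∂U¹/∂λ)·Φ and ∂F^{ST}/∂ξ₂ = Φ⁻¹·(∂U²/∂λ)·Φ. -/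
open Matrix

noncomputable section

attribute [local instance] Matrix.normedAddCommGroup Matrix.normedSpace

namespace SymTafelAux

variable {N : ℕ}

/-- The matrix norm, with its topology replaced by the standard matrix topology. -/
abbrev matNAG (N : ℕ) : NormedAddCommGroup (Matrix (Fin N) (Fin N) ℂ) where
  toNorm := (Matrix.normedAddCommGroup : NormedAddCommGroup (Matrix (Fin N) (Fin N) ℂ)).toNorm
  toAddCommGroup := Matrix.addCommGroup
  toMetricSpace := (Matrix.normedAddCommGroup :
    NormedAddCommGroup (Matrix (Fin N) (Fin N) ℂ)).toMetricSpace.replaceTopology rfl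
  dist_eq := (Matrix.normedAddCommGroup : NormedAddCommGroup (Matrix (Fin N) (Fin N) ℂ)).dist_eq

/-- The corresponding normed space structure. -/
abbrev matNS (N : ℕ) :
    @NormedSpace ℝ (Matrix (Fin N) (Fin N) ℂ) _ (matNAG N).toSeminormedAddCommGroup where
  toModule := Matrix.module
  norm_smul_le := (Matrix.normedSpace : NormedSpace ℝ (Matrix (Fin N) (Fin N) ℂ)).norm_smul_le

attribute [local instance] matNAG matNS

/-- Matrix multiplication as a continuous ℝ-bilinear map. -/
def mulCLM (N : ℕ) : Matrix (Fin N) (Fin N) ℂ →L[ℝ] Matrix (Fin N) (Fin N) ℂ →L[ℝ]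
    Matrix (Fin N) (Fin N) ℂ :=
  LinearMap.toContinuousLinearMap
    ((LinearMap.toContinuousLinearMap :
        (Matrix (Fin N) (Fin N) ℂ →ₗ[ℝ] Matrix (Fin N) (Fin N) ℂ) ≃ₗ[ℝ]
          (Matrix (Fin N) (Fin N) ℂ →L[ℝ] Matrix (Fin N) (Fin N) ℂ)).toLinearMap ∘ₗ
      LinearMap.mul ℝ (Matrix (Fin N) (Fin N) ℂ))

@[simp] lemma mulCLM_apply (A B : Matrix (Fin N) (Fin N) ℂ) : mulCLM N A B = A * B := rfl

lemma fderiv_mul_apply {f g : ℝ × ℝ × ℂ → Matrix (Fin N) (Fin N) ℂ} {x : ℝ × ℝ × ℂ}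
    (hf : DifferentiableAt ℝ f x) (hg : DifferentiableAt ℝ g x) (v : ℝ × ℝ × ℂ) :
    fderiv ℝ (fun y => f y * g y) x v
      = f x * fderiv ℝ g x v + fderiv ℝ f x v * g x := by
  have h := ((mulCLM N).hasFDerivAt_of_bilinear hf.hasFDerivAt hg.hasFDerivAt).fderiv
  rw [show (fun y => f y * g y) = fun y => mulCLM N (f y) (g y) from rfl, h]
  rfl

lemma contDiff_entry (n : WithTop ℕ∞) (i j : Fin N) :
    ContDiff ℝ n (fun A : Matrix (Fin N) (Fin N) ℂ => A i j) :=
  contDiff_pi.mp (contDiff_pi.mp contDiff_id i) j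

lemma contDiff_det (n : WithTop ℕ∞) :
    ContDiff ℝ n (fun A : Matrix (Fin N) (Fin N) ℂ => A.det) := by
  simp only [Matrix.det_apply']
  exact ContDiff.sum fun σ _ =>
    contDiff_const.mul (contDiff_prod fun i _ => contDiff_entry n _ _)

lemma contDiff_updateRow (n : WithTop ℕ∞) (j : Fin N) (c : Fin N → ℂ) :
    ContDiff ℝ n (fun A : Matrix (Fin N) (Fin N) ℂ => A.updateRow j c) := by
  apply contDiff_pi.mpr; intro k
  apply contDiff_pi.mpr; intro l
  simp only [Matrix.updateRow_apply]
  by_cases h : k = j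
  · simp only [h, if_pos rfl]; exact contDiff_const
  · simp only [if_neg h]; exact contDiff_entry n k l

lemma contDiff_adjugate (n : WithTop ℕ∞) :
    ContDiff ℝ n (fun A : Matrix (Fin N) (Fin N) ℂ => A.adjugate) := by
  apply contDiff_pi.mpr; intro i
  apply contDiff_pi.mpr; intro j
  simp only [Matrix.adjugate_apply]
  exact (contDiff_det n).comp (contDiff_updateRow n j (Pi.single i 1))

lemma contDiffOn_matrix_inv {f : ℝ × ℝ × ℂ → Matrix (Fin N) (Fin N) ℂ}
    {s : Set (ℝ × ℝ × ℂ)} {n : WithTop ℕ∞}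
    (hf : ContDiffOn ℝ n f s) (h : ∀ p ∈ s, IsUnit (f p)) :
    ContDiffOn ℝ n (fun p => (f p)⁻¹) s := by
  have hdet : ContDiffOn ℝ n (fun p => ((f p).det)⁻¹) s :=
    ((contDiff_det n).comp_contDiffOn hf).inv
      (fun p hp => ((Matrix.isUnit_iff_isUnit_det _).mp (h p hp)).ne_zero)
  have hadj : ContDiffOn ℝ n (fun p => (f p).adjugate) s :=
    (contDiff_adjugate n).comp_contDiffOn hf
  apply contDiffOn_pi.mpr; intro i
  apply contDiffOn_pi.mpr; intro j
  have he : ∀ p, (f p)⁻¹ i j = ((f p).det)⁻¹ * (f p).adjugate i j := fun p => by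
    rw [Matrix.inv_def, Ring.inverse_eq_inv', Matrix.smul_apply, smul_eq_mul]
  simp only [he]
  exact hdet.mul (contDiffOn_pi.mp (contDiffOn_pi.mp hadj i) j)

/-- Key computation: derivative of the Sym–Tafel immersion in a direction `v` in which
the spectral problem holds. -/
lemma key {U Phi : ℝ × ℝ × ℂ → Matrix (Fin N) (Fin N) ℂ}
    {S : Set (ℝ × ℝ × ℂ)} (hSo : IsOpen S)
    (hU : ContDiffOn ℝ 2 U S) (hPhi : ContDiffOn ℝ 2 Phi S)
    (hinv : ∀ p ∈ S, IsUnit (Phi p)) (v : ℝ × ℝ × ℂ)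
    (hlsp : ∀ p ∈ S, fderiv ℝ Phi p v = U p * Phi p)
    {p : ℝ × ℝ × ℂ} (hp : p ∈ S) :
    fderiv ℝ (fun q => (Phi q)⁻¹ * fderiv ℝ Phi q (0, 0, 1)) p v
      = (Phi p)⁻¹ * fderiv ℝ U p (0, 0, 1) * Phi p := by
  have hmem : S ∈ nhds p := hSo.mem_nhds hp
  have hPhidiff : ∀ q ∈ S, DifferentiableAt ℝ Phi q := fun q hq =>
    (hPhi.contDiffAt (hSo.mem_nhds hq)).differentiableAt (by norm_num)
  have hUdiff : DifferentiableAt ℝ U p :=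
    (hU.contDiffAt hmem).differentiableAt (by norm_num)
  have hD : ContDiffOn ℝ 1 (fun q => fderiv ℝ Phi q) S :=
    hPhi.fderiv_of_isOpen hSo (by norm_num)
  have hDat : DifferentiableAt ℝ (fun q => fderiv ℝ Phi q) p :=
    (hD.contDiffAt hmem).differentiableAt one_ne_zero
  have hA : DifferentiableAt ℝ (fun q => fderiv ℝ Phi q (0, 0, 1)) p :=
    hDat.clm_apply (differentiableAt_const _)
  have hInvat : DifferentiableAt ℝ (fun q => (Phi q)⁻¹) p :=
    ((contDiffOn_matrix_inv hPhi hinv).contDiffAt hmem).differentiableAt (by norm_num)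
  -- symmetry of the second derivative
  have hev : ∀ᶠ q in nhds p, HasFDerivAt Phi (fderiv ℝ Phi q) q :=
    Filter.eventually_of_mem hmem fun q hq => (hPhidiff q hq).hasFDerivAt
  have hsymm := second_derivative_symmetric_of_eventually hev hDat.hasFDerivAt
  -- derivative of q ↦ fderiv Phi q w, for any fixed w
  have hclm : ∀ w : ℝ × ℝ × ℂ,
      fderiv ℝ (fun q => fderiv ℝ Phi q w) p
        = (fderiv ℝ (fun q => fderiv ℝ Phi q) p).flip w := by
    intro w
    rw [fderiv_clm_apply hDat (differentiableAt_const _)]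
    simp
  -- mixed second derivatives
  set Plam := fderiv ℝ Phi p (0, 0, 1) with hPlam
  set Ulam := fderiv ℝ U p (0, 0, 1) with hUlam
  have hmix : fderiv ℝ (fun q => fderiv ℝ Phi q (0, 0, 1)) p v
      = U p * Plam + Ulam * Phi p := by
    have e1 : fderiv ℝ (fun q => fderiv ℝ Phi q (0, 0, 1)) p v
        = fderiv ℝ (fun q => fderiv ℝ Phi q) p v (0, 0, 1) := by
      rw [hclm (0, 0, 1)]; rfl
    have e2 : fderiv ℝ (fun q => fderiv ℝ Phi q v) p (0, 0, 1)
        = fderiv ℝ (fun q => fderiv ℝ Phi q) p (0, 0, 1) v := by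
      rw [hclm v]; rfl
    rw [e1, hsymm v (0, 0, 1), ← e2]
    have heq : (fun q => fderiv ℝ Phi q v) =ᶠ[nhds p] fun q => U q * Phi q :=
      Filter.eventuallyEq_of_mem hmem hlsp
    rw [heq.fderiv_eq, fderiv_mul_apply hUdiff (hPhidiff p hp)]
  -- derivative of the inverse
  have hdet1 : Phi p * (Phi p)⁻¹ = 1 :=
    Matrix.mul_nonsing_inv _ ((Matrix.isUnit_iff_isUnit_det _).mp (hinv p hp))
  have hdet2 : (Phi p)⁻¹ * Phi p = 1 :=
    Matrix.nonsing_inv_mul _ ((Matrix.isUnit_iff_isUnit_det _).mp (hinv p hp))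
  have hinvderiv : fderiv ℝ (fun q => (Phi q)⁻¹) p v = -((Phi p)⁻¹ * U p) := by
    have hone : (fun q => Phi q * (Phi q)⁻¹) =ᶠ[nhds p] fun _ => 1 :=
      Filter.eventuallyEq_of_mem hmem fun q hq =>
        Matrix.mul_nonsing_inv _ ((Matrix.isUnit_iff_isUnit_det _).mp (hinv q hq))
    have hz : fderiv ℝ (fun q => Phi q * (Phi q)⁻¹) p v = 0 := by
      rw [hone.fderiv_eq, fderiv_fun_const]; rfl
    rw [fderiv_mul_apply (hPhidiff p hp) hInvat v, hlsp p hp] at hz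
    have hkey : Phi p * fderiv ℝ (fun q => (Phi q)⁻¹) p v = -(U p) := by
      have h2 : U p * Phi p * (Phi p)⁻¹ = U p := by
        rw [mul_assoc, hdet1, mul_one]
      have h1 := eq_neg_of_add_eq_zero_left hz
      rw [h1, h2]
    calc fderiv ℝ (fun q => (Phi q)⁻¹) p v
        = ((Phi p)⁻¹ * Phi p) * fderiv ℝ (fun q => (Phi q)⁻¹) p v := by
          rw [hdet2, one_mul]
      _ = (Phi p)⁻¹ * (Phi p * fderiv ℝ (fun q => (Phi q)⁻¹) p v) := by
          rw [mul_assoc]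
      _ = -((Phi p)⁻¹ * U p) := by rw [hkey, mul_neg]
  -- final computation
  rw [fderiv_mul_apply hInvat hA v, hmix, hinvderiv]
  have h3 : (Phi p)⁻¹ * (U p * Plam) = (Phi p)⁻¹ * U p * Plam := by rw [mul_assoc]
  rw [mul_add, h3, neg_mul, ← mul_assoc]
  rw [← hPlam]; abel

end SymTafelAux

/-- If `Φ(ξ₁, ξ₂, λ)` is invertible and solves the linear spectral problem
`∂Φ/∂ξ₁ = U¹·Φ`, `∂Φ/∂ξ₂ = U²·Φ` for all `(ξ₁, ξ₂)` and `λ` in an open set `Λ`, then the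
Sym–Tafel immersion `F^{ST} = Φ⁻¹·(∂Φ/∂λ)` has tangent vectors
`∂F^{ST}/∂ξᵢ = Φ⁻¹·(∂Uⁱ/∂λ)·Φ`. -/
theorem Sym_Tafel_tangent_vectors {N : ℕ} (Λ : Set ℂ) (hΛ : IsOpen Λ)
    (U1 U2 Phi : ℝ × ℝ × ℂ → Matrix (Fin N) (Fin N) ℂ)
    (S : Set (ℝ × ℝ × ℂ)) (hS : S = {p : ℝ × ℝ × ℂ | p.2.2 ∈ Λ})
    (hU1 : ContDiffOn ℝ 2 U1 S) (hU2 : ContDiffOn ℝ 2 U2 S)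
    (hPhi : ContDiffOn ℝ 2 Phi S)
    (hinv : ∀ p ∈ S, IsUnit (Phi p))
    (hlsp1 : ∀ p ∈ S, fderiv ℝ Phi p (1, 0, 0) = U1 p * Phi p)
    (hlsp2 : ∀ p ∈ S, fderiv ℝ Phi p (0, 1, 0) = U2 p * Phi p)
    (F : ℝ × ℝ × ℂ → Matrix (Fin N) (Fin N) ℂ)
    (hF : F = fun p => (Phi p)⁻¹ * fderiv ℝ Phi p (0, 0, 1)) :
    ∀ p ∈ S, fderiv ℝ F p (1, 0, 0) = (Phi p)⁻¹ * fderiv ℝ U1 p (0, 0, 1) * Phi p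
      ∧ fderiv ℝ F p (0, 1, 0) = (Phi p)⁻¹ * fderiv ℝ U2 p (0, 0, 1) * Phi p := by
  subst hF
  have hSo : IsOpen S := by
    rw [hS]
    exact hΛ.preimage (continuous_snd.comp continuous_snd)
  intro p hp
  exact ⟨SymTafelAux.key hSo hU1 hPhi hinv (1, 0, 0) hlsp1 hp,
    SymTafelAux.key hSo hU2 hPhi hinv (0, 1, 0) hlsp2 hp⟩
end
end

section
/- Let U¹, U², A, B : ℝ² → Matrix (Fin N) (Fin N) ℂ be continuously differentiable, and let Φ : ℝ² → Matrix (Fin N) (Fin N) ℂ be continuously differentiable and everywhere invertible with ∂Φ/∂ξ₁ = U¹·Φ and ∂Φ/∂ξ₂ = U²·Φ. If A and B satisfy the Gauss–Mainardi–Codazzi equations ∂A/∂ξ₂ − ∂B/∂ξ₁ + [A, U²] + [U¹, B] = 0, then the matrix-valued 1-form (Φ⁻¹·A·Φ) dξ₁ + (Φ⁻¹·B·Φ) dξ₂ is closed, i.e. ∂(Φ⁻¹·A·Φ)/∂ξ₂ = ∂(Φ⁻¹·B·Φ)/∂ξ₁; consequently there exists F : ℝ² → Matrix (Fin N) (Fin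 N) ℂ with ∂F/∂ξ₁ = Φ⁻¹·A·Φ and ∂F/∂ξ₂ = Φ⁻¹·B·Φ (the Fokas–Gel'fand immersion). -/
open Matrix Asymptotics MeasureTheory intervalIntegral

noncomputable section

attribute [local instance] Matrix.normedAddCommGroup Matrix.normedSpace

namespace FokasGelfandAux

abbrev M (N : ℕ) := Matrix (Fin N) (Fin N) ℂ

variable {N : ℕ}

/-- Multiplication of matrices as a continuous bilinear map (w.r.t. the sup norm). -/
def mulL : M N →L[ℝ] M N →L[ℝ] M N :=
  LinearMap.toContinuousLinearMap
    { toFun := fun a => LinearMap.toContinuousLinearMap (LinearMap.mulLeft ℝ a)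
      map_add' := by intros; ext; simp [add_mul]
      map_smul' := by intros; ext; simp }

@[simp] lemma mulL_apply (a b : M N) : mulL a b = a * b := rfl

lemma contMul : Continuous (fun q : M N × M N => q.1 * q.2) :=
  (mulL (N := N)).isBoundedBilinearMap.continuous

lemma cont_matmul {X : Type*} [TopologicalSpace X] {f g : X → M N}
    (hf : Continuous f) (hg : Continuous g) : Continuous (fun x => f x * g x) :=
  contMul.comp (hf.prodMk hg)

lemma hasFDerivAt_matmul {f g : ℝ × ℝ → M N} {f' g' : ℝ × ℝ →L[ℝ] M N} {p : ℝ × ℝ}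
    (hf : HasFDerivAt f f' p) (hg : HasFDerivAt g g' p) :
    HasFDerivAt (fun q => f q * g q)
      ((show ℝ × ℝ →L[ℝ] M N from ((mulL (N := N)).flip (g p)).comp f') + (show ℝ × ℝ →L[ℝ] M N from ((mulL (f p))).comp g')) p := by
  have h := ((mulL (N := N)).isBoundedBilinearMap.hasFDerivAt (f p, g p)).comp p (hf.prodMk hg)
  refine HasFDerivAt.congr_fderiv h ?_
  refine ContinuousLinearMap.ext fun v => ?_
  simp [IsBoundedBilinearMap.deriv_apply, add_comm]
  change f p * g' v + f' v * g p = f' v * g p + f p * g' v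
  exact add_comm _ _

lemma cont_inv {Phi : ℝ × ℝ → M N} (hPhi : Continuous Phi) (hinv : ∀ p, IsUnit (Phi p)) :
    Continuous (fun q => (Phi q)⁻¹) := by
  have hdet : Continuous fun q => (Phi q).det := hPhi.matrix_det
  have hne : ∀ q, (Phi q).det ≠ 0 := fun q =>
    (Matrix.isUnit_iff_isUnit_det _ |>.1 (hinv q)).ne_zero
  have h2 : Continuous fun q => (Phi q).det⁻¹ • (Phi q).adjugate :=
    ((hdet.inv₀ hne)).smul hPhi.matrix_adjugate
  convert h2 using 1
  funext q
  rw [Matrix.inv_def, Ring.inverse_eq_inv']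

lemma hasFDerivAt_matinv {Phi : ℝ × ℝ → M N} {D : ℝ × ℝ →L[ℝ] M N} {p : ℝ × ℝ}
    (hD : HasFDerivAt Phi D p) (hinv : ∀ q, IsUnit (Phi q))
    (hcont : ContinuousAt (fun q => (Phi q)⁻¹) p) :
    HasFDerivAt (fun q => (Phi q)⁻¹)
      (-((mulL ((Phi p)⁻¹)).comp (((mulL (N := N)).flip ((Phi p)⁻¹)).comp D))) p := by
  set ψ := (Phi p)⁻¹ with hψ
  set L : ℝ × ℝ →L[ℝ] M N := -((mulL ψ).comp (((mulL (N := N)).flip ψ).comp D)) with hL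
  have hdet : ∀ q, IsUnit (Phi q).det := fun q => (Matrix.isUnit_iff_isUnit_det _).1 (hinv q)
  have key : ∀ q, (Phi q)⁻¹ - ψ - L (q - p)
      = -((((Phi q)⁻¹ - ψ) * (Phi q - Phi p)) * ψ)
        - (ψ * (Phi q - Phi p - D (q - p))) * ψ := by
    intro q
    have h1 : (Phi q)⁻¹ * Phi q = 1 := Matrix.nonsing_inv_mul _ (hdet q)
    have h2 : Phi p * ψ = 1 := Matrix.mul_nonsing_inv _ (hdet p)
    have h3 : ψ * Phi p = 1 := Matrix.nonsing_inv_mul _ (hdet p)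
    have hLq : L (q - p) = -(ψ * (D (q - p) * ψ)) := by
      rfl
    have h4 : (Phi q)⁻¹ * (Phi q * ψ) = ψ := by rw [← mul_assoc, h1, one_mul]
    rw [hLq]
    simp only [mul_sub, sub_mul, mul_assoc, h2, h3, mul_one, one_mul, h4]
    abel
  refine hasFDerivAt_iff_isLittleO.2 ?_
  have hx : Filter.Tendsto (fun q => (Phi q)⁻¹ - ψ) (nhds p) (nhds 0) := by
    simpa [hψ] using hcont.tendsto.sub_const ψ
  have ho : (fun q => (Phi q)⁻¹ - ψ) =o[nhds p] (fun _ => (1 : ℝ)) :=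
    (isLittleO_one_iff ℝ).2 hx
  have hB : (fun q => Phi q - Phi p) =O[nhds p] fun q => q - p := hD.isBigO_sub
  have h1 : (fun q => ((Phi q)⁻¹ - ψ) * (Phi q - Phi p))
      =O[nhds p] (fun q => ‖(Phi q)⁻¹ - ψ‖ * ‖Phi q - Phi p‖) := by
    obtain ⟨Cb, hCb⟩ : ∃ C : ℝ, ∀ a b : M N, ‖a * b‖ ≤ C * ‖a‖ * ‖b‖ :=
      ⟨_, fun a b => (mulL (N := N)).le_opNorm₂ a b⟩
    refine IsBigO.of_bound Cb (Filter.Eventually.of_forall fun q => ?_)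
    have h := hCb ((Phi q)⁻¹ - ψ) (Phi q - Phi p)
    change ‖((Phi q)⁻¹ - ψ) * (Phi q - Phi p)‖ ≤ _ at h
    rw [Real.norm_of_nonneg (mul_nonneg (norm_nonneg _) (norm_nonneg _)), ← mul_assoc]
    exact h
  have h2 : (fun q => ‖(Phi q)⁻¹ - ψ‖ * ‖Phi q - Phi p‖)
      =o[nhds p] (fun q => (1 : ℝ) * ‖q - p‖) := ho.norm_left.mul_isBigO hB.norm_norm
  simp only [one_mul] at h2
  have inner : (fun q => ((Phi q)⁻¹ - ψ) * (Phi q - Phi p)) =o[nhds p] fun q => q - p :=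
    h1.trans_isLittleO (isLittleO_norm_right.1 h2)
  have T1 : (fun q => (((Phi q)⁻¹ - ψ) * (Phi q - Phi p)) * ψ) =o[nhds p] fun q => q - p :=
    (((mulL (N := N)).flip ψ).isBigO_comp _ _).trans_isLittleO inner
  have T2 : (fun q => (ψ * (Phi q - Phi p - D (q - p))) * ψ) =o[nhds p] fun q => q - p := by
    have hd : (fun q => Phi q - Phi p - D (q - p)) =o[nhds p] fun q => q - p := hD.isLittleO
    exact ((((mulL (N := N)).flip ψ).comp (mulL ψ)).isBigO_comp _ _).trans_isLittleO hd
  exact (T1.neg_left.sub T2).congr'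
    (Filter.Eventually.of_forall fun q => (key q).symm)
    (Filter.Eventually.of_forall fun _ => rfl)

lemma hasFDerivAt_of_partials {E : Type*} [NormedAddCommGroup E] [NormedSpace ℝ E]
    {f g h : ℝ × ℝ → E} {p : ℝ × ℝ}
    (hg : ∀ q : ℝ × ℝ, HasDerivAt (fun x => f (x, q.2)) (g q) q.1)
    (hh : ∀ q : ℝ × ℝ, HasDerivAt (fun y => f (q.1, y)) (h q) q.2)
    (hgc : ContinuousAt g p) (hhc : ContinuousAt h p) :
    HasFDerivAt f ((ContinuousLinearMap.fst ℝ ℝ ℝ).smulRight (g p)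
      + (ContinuousLinearMap.snd ℝ ℝ ℝ).smulRight (h p)) p := by
  rw [hasFDerivAt_iff_isLittleO, isLittleO_iff]
  intro c hc
  have hc2 : (0 : ℝ) < c / 2 := by positivity
  have e1 : ∀ᶠ q in nhds p, ‖g q - g p‖ < c / 2 := by
    have := Metric.tendsto_nhds.mp hgc.tendsto (c / 2) hc2
    simpa [dist_eq_norm] using this
  have e2 : ∀ᶠ q in nhds p, ‖h q - h p‖ < c / 2 := by
    have := Metric.tendsto_nhds.mp hhc.tendsto (c / 2) hc2
    simpa [dist_eq_norm] using this
  obtain ⟨ε, εpos, hε⟩ := Metric.eventually_nhds_iff.mp (e1.and e2)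
  rw [Metric.eventually_nhds_iff]
  refine ⟨ε, εpos, fun q hq => ?_⟩
  obtain ⟨x, y⟩ := q
  obtain ⟨x₀, y₀⟩ := p
  rw [Prod.dist_eq] at hq
  have hx : dist x x₀ < ε := lt_of_le_of_lt le_sup_left hq
  have hy : dist y y₀ < ε := lt_of_le_of_lt le_sup_right hq
  have haux : ∀ t ∈ Set.uIcc x₀ x, dist ((t, y) : ℝ × ℝ) (x₀, y₀) < ε := by
    intro t ht
    rw [Prod.dist_eq]
    refine max_lt ?_ hy
    calc dist t x₀ = |t - x₀| := Real.dist_eq _ _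
    _ ≤ |x - x₀| := Set.abs_sub_left_of_mem_uIcc ht
    _ = dist x x₀ := (Real.dist_eq _ _).symm
    _ < ε := hx
  have haux2 : ∀ t ∈ Set.uIcc y₀ y, dist ((x₀, t) : ℝ × ℝ) (x₀, y₀) < ε := by
    intro t ht
    rw [Prod.dist_eq]
    refine max_lt (by simpa using εpos) ?_
    calc dist t y₀ = |t - y₀| := Real.dist_eq _ _
    _ ≤ |y - y₀| := Set.abs_sub_left_of_mem_uIcc ht
    _ = dist y y₀ := (Real.dist_eq _ _).symm
    _ < ε := hy
  have B1 : ‖(f (x, y) - x • g (x₀, y₀)) - (f (x₀, y) - x₀ • g (x₀, y₀))‖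
      ≤ (c / 2) * ‖x - x₀‖ := by
    refine Convex.norm_image_sub_le_of_norm_hasDerivWithin_le
      (f := fun t => f (t, y) - t • g (x₀, y₀)) (f' := fun t => g (t, y) - g (x₀, y₀))
      (fun t ht => ?_) (fun t ht => ?_) (convex_uIcc _ _)
      Set.left_mem_uIcc Set.right_mem_uIcc
    · have h1 : HasDerivAt (fun t => f (t, y)) (g (t, y)) t := hg (t, y)
      have h2 : HasDerivAt (fun t : ℝ => t • g (x₀, y₀)) (g (x₀, y₀)) t := by
        simpa using (hasDerivAt_id t).smul_const (g (x₀, y₀))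
      exact (h1.sub h2).hasDerivWithinAt
    · exact le_of_lt (hε (haux t ht)).1
  have B2 : ‖(f (x₀, y) - y • h (x₀, y₀)) - (f (x₀, y₀) - y₀ • h (x₀, y₀))‖
      ≤ (c / 2) * ‖y - y₀‖ := by
    refine Convex.norm_image_sub_le_of_norm_hasDerivWithin_le
      (f := fun t => f (x₀, t) - t • h (x₀, y₀)) (f' := fun t => h (x₀, t) - h (x₀, y₀))
      (fun t ht => ?_) (fun t ht => ?_) (convex_uIcc _ _)
      Set.left_mem_uIcc Set.right_mem_uIcc
    · have h1 : HasDerivAt (fun t => f (x₀, t)) (h (x₀, t)) t := hh (x₀, t)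
      have h2 : HasDerivAt (fun t : ℝ => t • h (x₀, y₀)) (h (x₀, y₀)) t := by
        simpa using (hasDerivAt_id t).smul_const (h (x₀, y₀))
      exact (h1.sub h2).hasDerivWithinAt
    · exact le_of_lt (hε (haux2 t ht)).2
  have decomp : f (x, y) - f (x₀, y₀)
      - (((ContinuousLinearMap.fst ℝ ℝ ℝ).smulRight (g (x₀, y₀))
        + (ContinuousLinearMap.snd ℝ ℝ ℝ).smulRight (h (x₀, y₀))) ((x, y) - (x₀, y₀)))
      = ((f (x, y) - x • g (x₀, y₀)) - (f (x₀, y) - x₀ • g (x₀, y₀)))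
        + ((f (x₀, y) - y • h (x₀, y₀)) - (f (x₀, y₀) - y₀ • h (x₀, y₀))) := by
    simp [Prod.fst_sub, Prod.snd_sub, sub_smul]
    abel
  rw [decomp]
  have hx' : ‖x - x₀‖ ≤ ‖((x, y) : ℝ × ℝ) - (x₀, y₀)‖ := by
    simpa using norm_fst_le (((x, y) : ℝ × ℝ) - (x₀, y₀))
  have hy' : ‖y - y₀‖ ≤ ‖((x, y) : ℝ × ℝ) - (x₀, y₀)‖ := by
    simpa using norm_snd_le (((x, y) : ℝ × ℝ) - (x₀, y₀))
  calc ‖_ + _‖ ≤ (c / 2) * ‖x - x₀‖ + (c / 2) * ‖y - y₀‖ :=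
        le_trans (norm_add_le _ _) (add_le_add B1 B2)
  _ ≤ (c / 2) * ‖((x, y) : ℝ × ℝ) - (x₀, y₀)‖ + (c / 2) * ‖((x, y) : ℝ × ℝ) - (x₀, y₀)‖ :=
        add_le_add (by gcongr) (by gcongr)
  _ = c * ‖((x, y) : ℝ × ℝ) - (x₀, y₀)‖ := by ring

lemma ftc1 {E : Type*} [NormedAddCommGroup E] [NormedSpace ℝ E] [CompleteSpace E]
    {f : ℝ → E} (hf : Continuous f) (a x : ℝ) :
    HasDerivAt (fun u => ∫ t in a..u, f t) (f x) x :=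
  (integral_hasStrictDerivAt_right (hf.intervalIntegrable _ _)
    (hf.stronglyMeasurableAtFilter _ _) hf.continuousAt).hasDerivAt

lemma my_fubini {E : Type*} [NormedAddCommGroup E] [NormedSpace ℝ E] [CompleteSpace E]
    {K : ℝ × ℝ → E} (hK : Continuous K) (x y : ℝ) :
    ∫ t in (0:ℝ)..x, (∫ s in (0:ℝ)..y, K (t, s)) =
      ∫ s in (0:ℝ)..y, (∫ t in (0:ℝ)..x, K (t, s)) := by
  have hInt : Integrable (Function.uncurry fun t s => K (t, s))
      ((volume.restrict (Set.uIoc 0 x)).prod (volume.restrict (Set.uIoc 0 y))) := by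
    rw [Measure.prod_restrict]
    have : IntegrableOn K (Set.uIcc 0 x ×ˢ Set.uIcc 0 y) (volume.prod volume) := by
      have hc : IsCompact (Set.uIcc (0:ℝ) x ×ˢ Set.uIcc (0:ℝ) y) :=
        isCompact_uIcc.prod isCompact_uIcc
      have := hK.continuousOn.integrableOn_compact (μ := volume.prod volume) hc
      simpa [Function.uncurry] using this
    refine (this.mono_set
      (Set.prod_mono Set.uIoc_subset_uIcc Set.uIoc_subset_uIcc)).congr_fun ?_ ?_
    · intro a b; rfl
    · exact (measurableSet_uIoc.prod measurableSet_uIoc)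
  simp only [intervalIntegral_eq_integral_uIoc]
  rw [MeasureTheory.integral_smul, MeasureTheory.integral_smul,
    integral_integral_swap hInt, smul_comm]

end FokasGelfandAux

open FokasGelfandAux

/-- If `Φ` is invertible and solves the linear spectral problem `∂₁Φ = U¹·Φ`, `∂₂Φ = U²·Φ`,
and `A`, `B` satisfy the Gauss–Mainardi–Codazzi equations
`∂₂A − ∂₁B + [A, U²] + [U¹, B] = 0`, then the 1-form `(Φ⁻¹AΦ)dξ₁ + (Φ⁻¹BΦ)dξ₂` is closed and
there exists a Fokas–Gel'fand immersion `F` with `∂₁F = Φ⁻¹AΦ` and `∂₂F = Φ⁻¹BΦ`. -/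
theorem Fokas_Gelfand_immersion {N : ℕ}
    (U1 U2 A B Phi : ℝ × ℝ → Matrix (Fin N) (Fin N) ℂ)
    (hU1 : ContDiff ℝ 1 U1) (hU2 : ContDiff ℝ 1 U2)
    (hA : ContDiff ℝ 1 A) (hB : ContDiff ℝ 1 B)
    (hPhi : ContDiff ℝ 1 Phi)
    (hinv : ∀ p, IsUnit (Phi p))
    (hlsp1 : ∀ p, fderiv ℝ Phi p (1, 0) = U1 p * Phi p)
    (hlsp2 : ∀ p, fderiv ℝ Phi p (0, 1) = U2 p * Phi p)
    (hGMC : ∀ p, fderiv ℝ A p (0, 1) - fderiv ℝ B p (1, 0)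
      + (A p * U2 p - U2 p * A p) + (U1 p * B p - B p * U1 p) = 0) :
    (∀ p, fderiv ℝ (fun q => (Phi q)⁻¹ * A q * Phi q) p (0, 1)
        = fderiv ℝ (fun q => (Phi q)⁻¹ * B q * Phi q) p (1, 0))
    ∧ ∃ F : ℝ × ℝ → Matrix (Fin N) (Fin N) ℂ,
        ∀ p, fderiv ℝ F p (1, 0) = (Phi p)⁻¹ * A p * Phi p
          ∧ fderiv ℝ F p (0, 1) = (Phi p)⁻¹ * B p * Phi p := by
  classical
  set G : ℝ × ℝ → M N := fun q => (Phi q)⁻¹ * A q * Phi q with hGdef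
  set H : ℝ × ℝ → M N := fun q => (Phi q)⁻¹ * B q * Phi q with hHdef
  set K : ℝ × ℝ → M N := fun q =>
    (Phi q)⁻¹ * (fderiv ℝ A q (0, 1) + (A q * U2 q - U2 q * A q)) * Phi q with hKdef
  have hdet : ∀ q, IsUnit (Phi q).det := fun q => (Matrix.isUnit_iff_isUnit_det _).1 (hinv q)
  have c1 : ∀ q, ∀ Z : M N, Phi q * ((Phi q)⁻¹ * Z) = Z := fun q Z => by
    rw [← mul_assoc, Matrix.mul_nonsing_inv _ (hdet q), one_mul]
  have c2 : ∀ q, ∀ Z : M N, (Phi q)⁻¹ * (Phi q * Z) = Z := fun q Z => by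
    rw [← mul_assoc, Matrix.nonsing_inv_mul _ (hdet q), one_mul]
  have c3 : ∀ q, Phi q * (Phi q)⁻¹ = 1 := fun q => Matrix.mul_nonsing_inv _ (hdet q)
  have c4 : ∀ q, (Phi q)⁻¹ * Phi q = 1 := fun q => Matrix.nonsing_inv_mul _ (hdet q)
  have hPhiD : ∀ q, HasFDerivAt Phi (fderiv ℝ Phi q) q := fun q =>
    (hPhi.differentiable one_ne_zero q).hasFDerivAt
  have hAD : ∀ q, HasFDerivAt A (fderiv ℝ A q) q := fun q =>
    (hA.differentiable one_ne_zero q).hasFDerivAt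
  have hBD : ∀ q, HasFDerivAt B (fderiv ℝ B q) q := fun q =>
    (hB.differentiable one_ne_zero q).hasFDerivAt
  have hΨc : Continuous (fun q => (Phi q)⁻¹) := cont_inv (hPhi.continuous) hinv
  have hΨD : ∀ q, HasFDerivAt (fun q => (Phi q)⁻¹)
      (-((mulL ((Phi q)⁻¹)).comp
        (((mulL (N := N)).flip ((Phi q)⁻¹)).comp (fderiv ℝ Phi q)))) q :=
    fun q => hasFDerivAt_matinv (hPhiD q) hinv hΨc.continuousAt
  have hGD := fun q => hasFDerivAt_matmul (hasFDerivAt_matmul (hΨD q) (hAD q)) (hPhiD q)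
  have hHD := fun q => hasFDerivAt_matmul (hasFDerivAt_matmul (hΨD q) (hBD q)) (hPhiD q)
  have hGD' : ∀ q, HasFDerivAt G
      ((show ℝ × ℝ →L[ℝ] M N from ((mulL (N := N)).flip (Phi q)).comp
          ((show ℝ × ℝ →L[ℝ] M N from ((mulL (N := N)).flip (A q)).comp
              (-((mulL ((Phi q)⁻¹)).comp
                (((mulL (N := N)).flip ((Phi q)⁻¹)).comp (fderiv ℝ Phi q)))))
            + (show ℝ × ℝ →L[ℝ] M N from (mulL ((Phi q)⁻¹)).comp (fderiv ℝ A q))))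
        + (show ℝ × ℝ →L[ℝ] M N from (mulL ((Phi q)⁻¹ * A q)).comp (fderiv ℝ Phi q))) q := fun q => hGD q
  have hHD' : ∀ q, HasFDerivAt H
      ((show ℝ × ℝ →L[ℝ] M N from ((mulL (N := N)).flip (Phi q)).comp
          ((show ℝ × ℝ →L[ℝ] M N from ((mulL (N := N)).flip (B q)).comp
              (-((mulL ((Phi q)⁻¹)).comp
                (((mulL (N := N)).flip ((Phi q)⁻¹)).comp (fderiv ℝ Phi q)))))
            + (show ℝ × ℝ →L[ℝ] M N from (mulL ((Phi q)⁻¹)).comp (fderiv ℝ B q))))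
        + (show ℝ × ℝ →L[ℝ] M N from (mulL ((Phi q)⁻¹ * B q)).comp (fderiv ℝ Phi q))) q := fun q => hHD q
  have hGval : ∀ q, fderiv ℝ G q (0, 1) = K q := by
    intro q
    rw [(hGD' q).fderiv]
    change ((-((Phi q)⁻¹ * (fderiv ℝ Phi q (0, 1) * (Phi q)⁻¹))) * A q
      + (Phi q)⁻¹ * fderiv ℝ A q (0, 1)) * Phi q + ((Phi q)⁻¹ * A q) * fderiv ℝ Phi q (0, 1) = K q
    simp only [ContinuousLinearMap.add_apply, ContinuousLinearMap.comp_apply,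
      ContinuousLinearMap.flip_apply, ContinuousLinearMap.neg_apply, mulL_apply, hlsp2 q,
      hKdef]
    simp only [mul_add, add_mul, mul_sub, sub_mul, neg_mul, mul_neg, mul_assoc,
      c1 q, c2 q, c3 q, c4 q, mul_one, one_mul]
    abel
  have hsame : ∀ q, fderiv ℝ B q (1, 0) + (B q * U1 q - U1 q * B q)
      = fderiv ℝ A q (0, 1) + (A q * U2 q - U2 q * A q) := by
    intro q
    have h0 := hGMC q
    have h1 : fderiv ℝ B q (1, 0) + (B q * U1 q - U1 q * B q)
        - (fderiv ℝ A q (0, 1) + (A q * U2 q - U2 q * A q))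
        = -(fderiv ℝ A q (0, 1) - fderiv ℝ B q (1, 0)
            + (A q * U2 q - U2 q * A q) + (U1 q * B q - B q * U1 q)) := by abel
    rw [h0, neg_zero] at h1
    exact sub_eq_zero.mp h1
  have hHval : ∀ q, fderiv ℝ H q (1, 0) = K q := by
    intro q
    rw [(hHD' q).fderiv]
    change ((-((Phi q)⁻¹ * (fderiv ℝ Phi q (1, 0) * (Phi q)⁻¹))) * B q
      + (Phi q)⁻¹ * fderiv ℝ B q (1, 0)) * Phi q + ((Phi q)⁻¹ * B q) * fderiv ℝ Phi q (1, 0) = K q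
    simp only [ContinuousLinearMap.add_apply, ContinuousLinearMap.comp_apply,
      ContinuousLinearMap.flip_apply, ContinuousLinearMap.neg_apply, mulL_apply, hlsp1 q,
      hKdef]
    rw [← hsame q]
    simp only [mul_add, add_mul, mul_sub, sub_mul, neg_mul, mul_neg, mul_assoc,
      c1 q, c2 q, c3 q, c4 q, mul_one, one_mul]
    abel
  have part1 : ∀ p, fderiv ℝ G p (0, 1) = fderiv ℝ H p (1, 0) := fun p =>
    (hGval p).trans (hHval p).symm
  -- continuity facts
  have hfdA : Continuous fun q => fderiv ℝ A q (0, 1) := by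
    have h := hA.continuous_fderiv one_ne_zero
    exact (ContinuousLinearMap.apply ℝ (M N) ((0:ℝ), (1:ℝ))).continuous.comp h
  have hKc : Continuous K := by
    rw [hKdef]
    exact cont_matmul (cont_matmul hΨc
      (hfdA.add ((cont_matmul hA.continuous hU2.continuous).sub
        (cont_matmul hU2.continuous hA.continuous)))) hPhi.continuous
  have hGc : Continuous G := by
    rw [hGdef]
    exact cont_matmul (cont_matmul hΨc hA.continuous) hPhi.continuous
  have hHc : Continuous H := by
    rw [hHdef]
    exact cont_matmul (cont_matmul hΨc hB.continuous) hPhi.continuous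
  -- slice derivatives
  have hGslice : ∀ x s : ℝ, HasDerivAt (fun s' => G (x, s')) (K (x, s)) s := by
    intro x s
    have hline : HasDerivAt (fun s' : ℝ => ((x, s') : ℝ × ℝ)) (((0:ℝ), (1:ℝ)) : ℝ × ℝ) s :=
      (hasDerivAt_const s x).prodMk (hasDerivAt_id s)
    have h := (hGD' (x, s)).comp_hasDerivAt s hline
    have h' : HasDerivAt (fun s' => G (x, s')) (fderiv ℝ G (x, s) (0, 1)) s := by
      rw [(hGD' (x, s)).fderiv]; exact h
    rw [hGval (x, s)] at h'
    exact h'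
  have hHslice : ∀ t y : ℝ, HasDerivAt (fun t' => H (t', y)) (K (t, y)) t := by
    intro t y
    have hline : HasDerivAt (fun t' : ℝ => ((t', y) : ℝ × ℝ)) (((1:ℝ), (0:ℝ)) : ℝ × ℝ) t :=
      (hasDerivAt_id t).prodMk (hasDerivAt_const t y)
    have h := (hHD' (t, y)).comp_hasDerivAt t hline
    have h' : HasDerivAt (fun t' => H (t', y)) (fderiv ℝ H (t, y) (1, 0)) t := by
      rw [(hHD' (t, y)).fderiv]; exact h
    rw [hHval (t, y)] at h'
    exact h'
  have intG : ∀ x y : ℝ, (∫ s in (0:ℝ)..y, K (x, s)) = G (x, y) - G (x, 0) := fun x y =>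
    integral_eq_sub_of_hasDerivAt (fun s _ => hGslice x s)
      ((hKc.comp (continuous_const.prodMk continuous_id)).intervalIntegrable _ _)
  have intH : ∀ x y : ℝ, (∫ t in (0:ℝ)..x, K (t, y)) = H (x, y) - H (0, y) := fun x y =>
    integral_eq_sub_of_hasDerivAt (fun t _ => hHslice t y)
      ((hKc.comp (continuous_id.prodMk continuous_const)).intervalIntegrable _ _)
  set F : ℝ × ℝ → M N := fun q =>
    (∫ t in (0:ℝ)..q.1, G (t, 0)) + (∫ s in (0:ℝ)..q.2, H (0, s))
      + ∫ t in (0:ℝ)..q.1, (∫ s in (0:ℝ)..q.2, K (t, s)) with hFdef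
  have hpart1 : ∀ q : ℝ × ℝ, HasDerivAt (fun x => F (x, q.2)) (G q) q.1 := by
    rintro ⟨x, y⟩
    have h1 : HasDerivAt (fun x' : ℝ => ∫ t in (0:ℝ)..x', G (t, 0)) (G (x, 0)) x :=
      ftc1 (hGc.comp (continuous_id.prodMk continuous_const)) 0 x
    have h3 : HasDerivAt (fun x' : ℝ => ∫ t in (0:ℝ)..x', (∫ s in (0:ℝ)..y, K (t, s)))
        (∫ s in (0:ℝ)..y, K (x, s)) x := by
      refine ftc1 ?_ 0 x
      exact intervalIntegral.continuous_parametric_intervalIntegral_of_continuous'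
        (f := fun t s => K (t, s)) (by exact hKc) 0 y
    have hsum := (h1.add (hasDerivAt_const x (∫ s in (0:ℝ)..y, H (0, s)))).add h3
    have e2 : (G ((x : ℝ), (y : ℝ)) : M N)
        = G (x, 0) + 0 + (∫ s in (0:ℝ)..y, K (x, s)) := by
      rw [intG x y]; abel
    show HasDerivAt (fun x' => F (x', y)) (G (x, y)) x
    rw [e2]
    exact hsum
  have hpart2 : ∀ q : ℝ × ℝ, HasDerivAt (fun y => F (q.1, y)) (H q) q.2 := by
    rintro ⟨x, y⟩
    show HasDerivAt (fun y' => F (x, y')) (H (x, y)) y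
    have hFalt : (fun y' => F (x, y')) = fun y' =>
        (∫ t in (0:ℝ)..x, G (t, 0)) + (∫ s in (0:ℝ)..y', H (0, s))
          + ∫ s in (0:ℝ)..y', (∫ t in (0:ℝ)..x, K (t, s)) := by
      funext y'
      rw [hFdef]
      simp only []
      rw [my_fubini hKc x y']
    rw [hFalt]
    have h2 : HasDerivAt (fun y' : ℝ => ∫ s in (0:ℝ)..y', H (0, s)) (H (0, y)) y :=
      ftc1 (hHc.comp (continuous_const.prodMk continuous_id)) 0 y
    have h3 : HasDerivAt (fun y' : ℝ => ∫ s in (0:ℝ)..y', (∫ t in (0:ℝ)..x, K (t, s)))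
        (∫ t in (0:ℝ)..x, K (t, y)) y := by
      refine ftc1 ?_ 0 y
      exact intervalIntegral.continuous_parametric_intervalIntegral_of_continuous'
        (f := fun s t => K (t, s)) (by exact hKc.comp continuous_swap) 0 x
    have hsum := ((hasDerivAt_const y (∫ t in (0:ℝ)..x, G (t, 0))).add h2).add h3
    have e2 : (H ((x : ℝ), (y : ℝ)) : M N)
        = 0 + H (0, y) + (∫ t in (0:ℝ)..x, K (t, y)) := by
      rw [intH x y]; abel
    rw [e2]
    exact hsum
  have hFD : ∀ q, HasFDerivAt F
      ((ContinuousLinearMap.fst ℝ ℝ ℝ).smulRight (G q)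
        + (ContinuousLinearMap.snd ℝ ℝ ℝ).smulRight (H q)) q := fun q =>
    hasFDerivAt_of_partials hpart1 hpart2 hGc.continuousAt hHc.continuousAt
  refine ⟨part1, F, fun p => ⟨?_, ?_⟩⟩
  · rw [(hFD p).fderiv]
    show (1 : ℝ) • G p + (0 : ℝ) • H p = G p
    simp
  · rw [(hFD p).fderiv]
    show (0 : ℝ) • G p + (1 : ℝ) • H p = H p
    simp
end
end

section
/- Let U¹, U² : ℝ² → Matrix (Fin N) (Fin N) ℂ be continuously differentiable satisfying the zero-curvature condition ∂U¹/∂ξ₂ − ∂U²/∂ξ₁ + [U¹, U²] = 0, and let Φ : ℝ² → Matrix (Fin N) (Fin N) ℂ be continuously differentiable, everywhere invertible, with ∂Φ/∂ξ₁ = U¹·Φ and ∂Φ/∂ξ₂ = U²·Φ. Then the surface F := Φ⁻¹·(ξ₁·U¹ + ξ₂·U²)·Φ associated with the scaling symmetry of the zero-curvature condition satisfies ∂F/∂ξ₁ = Φ⁻¹·(U¹ + ξ₁·∂U¹/∂ξ₁ + ξ₂·∂U¹/∂ξ₂)·Φ and ∂F/∂ξ₂ = Φ⁻¹·(ξ₁·∂U²/∂ξ₁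 + U² + ξ₂·∂U²/∂ξ₂)·Φ. -/
open Matrix

noncomputable section

attribute [local instance] Matrix.normedAddCommGroup Matrix.normedSpace

/-- Multiplication of matrices as a continuous `ℝ`-bilinear map. -/
def mulCLM (N : ℕ) : Matrix (Fin N) (Fin N) ℂ →L[ℝ] Matrix (Fin N) (Fin N) ℂ →L[ℝ]
    Matrix (Fin N) (Fin N) ℂ :=
  LinearMap.toContinuousLinearMap
    ((LinearMap.toContinuousLinearMap :
        (Matrix (Fin N) (Fin N) ℂ →ₗ[ℝ] Matrix (Fin N) (Fin N) ℂ) ≃ₗ[ℝ] _).toLinearMap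
      ∘ₗ LinearMap.mul ℝ (Matrix (Fin N) (Fin N) ℂ))

@[simp] theorem mulCLM_apply {N : ℕ} (a b : Matrix (Fin N) (Fin N) ℂ) :
    mulCLM N a b = a * b := rfl

/-- Leibniz rule for products of matrix-valued functions. -/
theorem hasFDerivAt_mul' {N : ℕ} {f g : ℝ × ℝ → Matrix (Fin N) (Fin N) ℂ}
    {f' g' : ℝ × ℝ →L[ℝ] Matrix (Fin N) (Fin N) ℂ} {x : ℝ × ℝ}
    (hf : HasFDerivAt f f' x) (hg : HasFDerivAt g g' x) :
    HasFDerivAt (fun y => f y * g y)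
      ((mulCLM N).precompR (ℝ × ℝ) (f x) g' + (mulCLM N).precompL (ℝ × ℝ) f' (g x)) x :=
  (mulCLM N).hasFDerivAt_of_bilinear hf hg

theorem mulD_apply {N : ℕ} (a b : Matrix (Fin N) (Fin N) ℂ)
    (f' g' : ℝ × ℝ →L[ℝ] Matrix (Fin N) (Fin N) ℂ) (v : ℝ × ℝ) :
    ((mulCLM N).precompR (ℝ × ℝ) a g' + (mulCLM N).precompL (ℝ × ℝ) f' b) v
      = f' v * b + a * g' v := by
  simp [ContinuousLinearMap.precompR, ContinuousLinearMap.precompL]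
  rw [add_comm]; rfl

theorem contDiff_det_aux {N : ℕ} {f : ℝ × ℝ → Matrix (Fin N) (Fin N) ℂ}
    (hf : ∀ i j, ContDiff ℝ 1 (fun p => f p i j)) :
    ContDiff ℝ 1 (fun p => (f p).det) := by
  simp only [Matrix.det_apply']
  apply ContDiff.sum
  intro σ _
  exact ContDiff.mul contDiff_const (contDiff_prod fun i _ => hf (σ i) i)

theorem contDiff_adjugate_aux {N : ℕ} {f : ℝ × ℝ → Matrix (Fin N) (Fin N) ℂ}
    (hf : ∀ i j, ContDiff ℝ 1 (fun p => f p i j)) (i j : Fin N) :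
    ContDiff ℝ 1 (fun p => (f p).adjugate i j) := by
  simp only [Matrix.adjugate_apply]
  apply contDiff_det_aux
  intro a b
  by_cases h : a = j
  · subst h; simp only [Matrix.updateRow_self]; exact contDiff_const
  · simp only [Matrix.updateRow_ne h]; exact hf a b

theorem contDiff_inv_mat {N : ℕ} {f : ℝ × ℝ → Matrix (Fin N) (Fin N) ℂ}
    (hf : ContDiff ℝ 1 f) (h : ∀ p, IsUnit (f p)) :
    ContDiff ℝ 1 (fun p => (f p)⁻¹) := by
  have he : ∀ i j, ContDiff ℝ 1 (fun p => f p i j) :=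
    fun i j => contDiff_pi.mp (contDiff_pi.mp hf i) j
  have hdet : ContDiff ℝ 1 (fun p => (f p).det) := contDiff_det_aux he
  have hne : ∀ p, (f p).det ≠ 0 := fun p =>
    IsUnit.ne_zero ((Matrix.isUnit_iff_isUnit_det _).mp (h p))
  have heq : (fun p => (f p)⁻¹) = fun p => ((f p).det)⁻¹ • (f p).adjugate := by
    funext p
    rw [Matrix.inv_def, Ring.inverse_eq_inv']
  rw [heq]
  refine contDiff_pi.mpr fun i => contDiff_pi.mpr fun j => ?_
  simp only [Matrix.smul_apply, smul_eq_mul]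
  exact (hdet.inv hne).mul (contDiff_adjugate_aux he i j)

/-- Derivative of the pointwise inverse of an invertible matrix-valued function. -/
theorem fderiv_inv_mat {N : ℕ} {Phi : ℝ × ℝ → Matrix (Fin N) (Fin N) ℂ}
    (hPhi : ContDiff ℝ 1 Phi) (hinv : ∀ p, IsUnit (Phi p)) (p v : ℝ × ℝ) :
    fderiv ℝ (fun q => (Phi q)⁻¹) p v
      = -((Phi p)⁻¹ * (fderiv ℝ Phi p v * (Phi p)⁻¹)) := by
  have hdet := (Matrix.isUnit_iff_isUnit_det _).mp (hinv p)
  have hr : Phi p * (Phi p)⁻¹ = 1 := Matrix.mul_nonsing_inv _ hdet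
  have hΨp : HasFDerivAt (fun q => (Phi q)⁻¹) (fderiv ℝ (fun q => (Phi q)⁻¹) p) p :=
    ((contDiff_inv_mat hPhi hinv).differentiable one_ne_zero p).hasFDerivAt
  have hPhip : HasFDerivAt Phi (fderiv ℝ Phi p) p :=
    (hPhi.differentiable one_ne_zero p).hasFDerivAt
  have hprod := hasFDerivAt_mul' hΨp hPhip
  have hconst : (fun q => (Phi q)⁻¹ * Phi q) = fun _ : ℝ × ℝ => (1 : Matrix (Fin N) (Fin N) ℂ) :=
    funext fun q => Matrix.nonsing_inv_mul _ ((Matrix.isUnit_iff_isUnit_det _).mp (hinv q))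
  rw [hconst] at hprod
  have hzero := hprod.unique (hasFDerivAt_const _ _)
  have h0 : fderiv ℝ (fun q => (Phi q)⁻¹) p v * Phi p + (Phi p)⁻¹ * fderiv ℝ Phi p v = 0 := by
    have := congrFun (congrArg DFunLike.coe hzero) v
    simpa [add_comm] using (mulD_apply _ _ _ _ v).symm.trans this
  have h1 : fderiv ℝ (fun q => (Phi q)⁻¹) p v * Phi p = -((Phi p)⁻¹ * fderiv ℝ Phi p v) :=
    eq_neg_of_add_eq_zero_left h0
  calc fderiv ℝ (fun q => (Phi q)⁻¹) p v
      = fderiv ℝ (fun q => (Phi q)⁻¹) p v * Phi p * (Phi p)⁻¹ := by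
        rw [mul_assoc, hr, mul_one]
    _ = -((Phi p)⁻¹ * (fderiv ℝ Phi p v * (Phi p)⁻¹)) := by
        rw [h1, neg_mul, mul_assoc]

set_option maxHeartbeats 1000000 in
/-- If `U¹, U²` satisfy the zero-curvature condition `∂₂U¹ − ∂₁U² + [U¹, U²] = 0` and `Φ` is an
invertible solution of the linear spectral problem `∂₁Φ = U¹Φ`, `∂₂Φ = U²Φ`, then the surface
`F = Φ⁻¹·(ξ₁U¹ + ξ₂U²)·Φ` associated with the scaling symmetry satisfies
`∂₁F = Φ⁻¹·(U¹ + ξ₁∂₁U¹ + ξ₂∂₂U¹)·Φ` and `∂₂F = Φ⁻¹·(ξ₁∂₁U² + U² + ξ₂∂₂U²)·Φ`. -/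
theorem scaling_symmetry_surface {N : ℕ}
    (U1 U2 Phi : ℝ × ℝ → Matrix (Fin N) (Fin N) ℂ)
    (hU1 : ContDiff ℝ 1 U1) (hU2 : ContDiff ℝ 1 U2)
    (hPhi : ContDiff ℝ 1 Phi)
    (hZC : ∀ p, fderiv ℝ U1 p (0, 1) - fderiv ℝ U2 p (1, 0)
      + (U1 p * U2 p - U2 p * U1 p) = 0)
    (hinv : ∀ p, IsUnit (Phi p))
    (hlsp1 : ∀ p, fderiv ℝ Phi p (1, 0) = U1 p * Phi p)
    (hlsp2 : ∀ p, fderiv ℝ Phi p (0, 1) = U2 p * Phi p)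
    (F : ℝ × ℝ → Matrix (Fin N) (Fin N) ℂ)
    (hF : F = fun p => (Phi p)⁻¹ * ((p.1 : ℂ) • U1 p + (p.2 : ℂ) • U2 p) * Phi p) :
    ∀ p, fderiv ℝ F p (1, 0)
        = (Phi p)⁻¹ * (U1 p + (p.1 : ℂ) • fderiv ℝ U1 p (1, 0)
            + (p.2 : ℂ) • fderiv ℝ U1 p (0, 1)) * Phi p
      ∧ fderiv ℝ F p (0, 1)
        = (Phi p)⁻¹ * ((p.1 : ℂ) • fderiv ℝ U2 p (1, 0) + U2 p
            + (p.2 : ℂ) • fderiv ℝ U2 p (0, 1)) * Phi p := by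
  subst hF
  intro p
  have hdet := (Matrix.isUnit_iff_isUnit_det _).mp (hinv p)
  have hl : (Phi p)⁻¹ * Phi p = 1 := Matrix.nonsing_inv_mul _ hdet
  have hr : Phi p * (Phi p)⁻¹ = 1 := Matrix.mul_nonsing_inv _ hdet
  have hl' : ∀ x : Matrix (Fin N) (Fin N) ℂ, (Phi p)⁻¹ * (Phi p * x) = x := fun x => by
    rw [← mul_assoc, hl, one_mul]
  have hr' : ∀ x : Matrix (Fin N) (Fin N) ℂ, Phi p * ((Phi p)⁻¹ * x) = x := fun x => by
    rw [← mul_assoc, hr, one_mul]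
  -- derivatives of the constituents
  have hΨp : HasFDerivAt (fun q => (Phi q)⁻¹) (fderiv ℝ (fun q => (Phi q)⁻¹) p) p :=
    ((contDiff_inv_mat hPhi hinv).differentiable one_ne_zero p).hasFDerivAt
  have hPhip : HasFDerivAt Phi (fderiv ℝ Phi p) p :=
    (hPhi.differentiable one_ne_zero p).hasFDerivAt
  have hU1p : HasFDerivAt U1 (fderiv ℝ U1 p) p := (hU1.differentiable one_ne_zero p).hasFDerivAt
  have hU2p : HasFDerivAt U2 (fderiv ℝ U2 p) p := (hU2.differentiable one_ne_zero p).hasFDerivAt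
  have hc1 : HasFDerivAt (fun q : ℝ × ℝ => (q.1 : ℂ))
      (Complex.ofRealCLM.comp (ContinuousLinearMap.fst ℝ ℝ ℝ)) p :=
    (Complex.ofRealCLM.hasFDerivAt).comp p hasFDerivAt_fst
  have hc2 : HasFDerivAt (fun q : ℝ × ℝ => (q.2 : ℂ))
      (Complex.ofRealCLM.comp (ContinuousLinearMap.snd ℝ ℝ ℝ)) p :=
    (Complex.ofRealCLM.hasFDerivAt).comp p hasFDerivAt_snd
  have hS : HasFDerivAt (fun q : ℝ × ℝ => (q.1 : ℂ) • U1 q + (q.2 : ℂ) • U2 q)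
      (((p.1 : ℂ) • fderiv ℝ U1 p
          + (Complex.ofRealCLM.comp (ContinuousLinearMap.fst ℝ ℝ ℝ)).smulRight (U1 p))
        + ((p.2 : ℂ) • fderiv ℝ U2 p
          + (Complex.ofRealCLM.comp (ContinuousLinearMap.snd ℝ ℝ ℝ)).smulRight (U2 p))) p :=
    (hc1.smul hU1p).add (hc2.smul hU2p)
  have hfd := hasFDerivAt_mul' (hasFDerivAt_mul' hΨp hS) hPhip
  have h2 : HasFDerivAt
      (fun q : ℝ × ℝ => (Phi q)⁻¹ * ((q.1 : ℂ) • U1 q + (q.2 : ℂ) • U2 q) * Phi q)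
      _ p := hfd
  rw [h2.fderiv]
  have hZC' : fderiv ℝ U1 p (0, 1)
      = fderiv ℝ U2 p (1, 0) + (U2 p * U1 p - U1 p * U2 p) := by
    have h := hZC p
    have := eq_neg_of_add_eq_zero_left h
    rw [sub_eq_iff_eq_add] at this
    rw [this]
    abel
  have hIv : ∀ v, fderiv ℝ (fun q => (Phi q)⁻¹) p v
      = -((Phi p)⁻¹ * (fderiv ℝ Phi p v * (Phi p)⁻¹)) := fderiv_inv_mat hPhi hinv p
  constructor <;>
  · erw [mulD_apply, mulD_apply]
    simp only [ContinuousLinearMap.add_apply, ContinuousLinearMap.comp_apply,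
      ContinuousLinearMap.smulRight_apply, ContinuousLinearMap.coe_fst',
      ContinuousLinearMap.coe_snd', ContinuousLinearMap.smul_apply,
      Complex.ofRealCLM_apply, hIv, hlsp1, hlsp2]
    simp only [Complex.ofReal_one, Complex.ofReal_zero, one_smul, zero_smul, add_zero, zero_add,
      hZC']
    simp only [mul_assoc, hr', hl']
    simp only [smul_add, smul_sub, smul_mul_assoc, mul_smul_comm, mul_add, add_mul, mul_sub,
      sub_mul, neg_mul, mul_neg, mul_assoc, hr', hl']
    module
end
end

section
/- Let U¹, U² : ℝ² → Matrix (Fin N) (Fin N) ℂ be continuously differentiable, written as functions of ξ₊ = x + iy and ξ₋ = x − iy, satisfying the zero-curvature condition ∂₋U¹ − ∂₊U² + [U¹, U²] = 0, and let Φ : ℝ² → Matrix (Fin N) (Fin N) ℂ be continuously differentiable, everywhere invertible, with ∂₊Φ = U¹·Φ and ∂₋Φ = U²·Φ. Let g : ℂ → ℂ be holomorphic and let ḡ(ξ₋) denote its complex conjugate function. Then the surface F := Φ⁻¹·(g(ξ₊)·U¹ + ḡ(ξ₋)·U²)·Φ associated with the conformal symmetry satisfies ∂₊F = Φ⁻¹·(∂₊(g·U¹)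 + ḡ·∂₋U¹)·Φ and ∂₋F = Φ⁻¹·(g·∂₊U² + ∂₋(ḡ·U²))·Φ. -/
open Matrix

noncomputable section

attribute [local instance] Matrix.normedAddCommGroup Matrix.normedSpace

/-- The Wirtinger derivative `∂₊ = ½(∂/∂x − i ∂/∂y)` of a matrix-valued map on `ℝ²`. -/
def dp {N : ℕ} (P : ℝ × ℝ → Matrix (Fin N) (Fin N) ℂ) (p : ℝ × ℝ) :
    Matrix (Fin N) (Fin N) ℂ :=
  (2 : ℂ)⁻¹ • (fderiv ℝ P p (1, 0) - Complex.I • fderiv ℝ P p (0, 1))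

/-- The Wirtinger derivative `∂₋ = ½(∂/∂x + i ∂/∂y)` of a matrix-valued map on `ℝ²`. -/
def dm {N : ℕ} (P : ℝ × ℝ → Matrix (Fin N) (Fin N) ℂ) (p : ℝ × ℝ) :
    Matrix (Fin N) (Fin N) ℂ :=
  (2 : ℂ)⁻¹ • (fderiv ℝ P p (1, 0) + Complex.I • fderiv ℝ P p (0, 1))

namespace ConfAux

variable {N : ℕ}

abbrev Mat (N : ℕ) := Matrix (Fin N) (Fin N) ℂ

/-! ### Entries and matrices built from entries -/

/-- The matrix entry, as a continuous linear map. -/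
def entryCLM (i j : Fin N) : Mat N →L[ℝ] ℂ :=
  LinearMap.toContinuousLinearMap
    { toFun := fun A => A i j
      map_add' := fun _ _ => rfl
      map_smul' := fun _ _ => rfl }

@[simp] lemma entryCLM_apply (i j : Fin N) (A : Mat N) : entryCLM i j A = A i j := rfl

lemma diffAt_entry {f : ℝ × ℝ → Mat N} {p : ℝ × ℝ}
    (h : DifferentiableAt ℝ f p) (i j : Fin N) :
    DifferentiableAt ℝ (fun q => f q i j) p :=
  ((entryCLM i j).differentiableAt).comp p h

lemma differentiableAt_of_entries {f : ℝ × ℝ → Mat N} {p : ℝ × ℝ}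
    (h : ∀ i j, DifferentiableAt ℝ (fun q => f q i j) p) :
    DifferentiableAt ℝ f p := by
  have hf : f = fun q => ∑ i : Fin N, ∑ j : Fin N, (f q i j) • single i j (1 : ℂ) := by
    funext q
    conv_lhs => rw [matrix_eq_sum_single (f q)]
    simp [Matrix.smul_single]
  rw [hf]
  exact DifferentiableAt.fun_sum fun i _ => DifferentiableAt.fun_sum fun j _ =>
    (h i j).smul_const (single i j (1 : ℂ) : Mat N)

/-! ### Matrix multiplication as a continuous bilinear map, and product rules -/

/-- Matrix multiplication, as a continuous bilinear map. -/
def mulCLM : Mat N →L[ℝ] Mat N →L[ℝ] Mat N :=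
  LinearMap.toContinuousLinearMap
    (((LinearMap.toContinuousLinearMap :
        (Mat N →ₗ[ℝ] Mat N) ≃ₗ[ℝ] (Mat N →L[ℝ] Mat N)) :
      (Mat N →ₗ[ℝ] Mat N) →ₗ[ℝ] (Mat N →L[ℝ] Mat N)).comp
      (LinearMap.mul ℝ (Mat N)))

@[simp] lemma mulCLM_apply (A B : Mat N) : (mulCLM A) B = A * B := rfl

variable {A B : ℝ × ℝ → Mat N} {c : ℝ × ℝ → ℂ} {p : ℝ × ℝ}

lemma hasFDerivAt_mul (hA : DifferentiableAt ℝ A p) (hB : DifferentiableAt ℝ B p) :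
    HasFDerivAt (fun q => A q * B q)
      (((mulCLM.isBoundedBilinearMap).deriv (A p, B p)).comp
        ((fderiv ℝ A p).prod (fderiv ℝ B p))) p :=
  (((mulCLM.isBoundedBilinearMap).hasFDerivAt (A p, B p)).comp p
    (hA.hasFDerivAt.prodMk hB.hasFDerivAt) :)

lemma diffAt_matmul (hA : DifferentiableAt ℝ A p) (hB : DifferentiableAt ℝ B p) :
    DifferentiableAt ℝ (fun q => A q * B q) p :=
  (hasFDerivAt_mul hA hB).differentiableAt

lemma fderiv_matmul (hA : DifferentiableAt ℝ A p) (hB : DifferentiableAt ℝ B p) (v : ℝ × ℝ) :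
    fderiv ℝ (fun q => A q * B q) p v
      = fderiv ℝ A p v * B p + A p * fderiv ℝ B p v := by
  rw [show fderiv ℝ (fun q => A q * B q) p = _ from (hasFDerivAt_mul hA hB).fderiv]
  simp [IsBoundedBilinearMap.deriv_apply, add_comm]
  rfl

/-! ### Wirtinger calculus for sums, products and scalar multiples -/

/-- The scalar Wirtinger derivative `∂₊`. -/
def dpC (c : ℝ × ℝ → ℂ) (p : ℝ × ℝ) : ℂ :=
  (2 : ℂ)⁻¹ * (fderiv ℝ c p (1, 0) - Complex.I * fderiv ℝ c p (0, 1))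

/-- The scalar Wirtinger derivative `∂₋`. -/
def dmC (c : ℝ × ℝ → ℂ) (p : ℝ × ℝ) : ℂ :=
  (2 : ℂ)⁻¹ * (fderiv ℝ c p (1, 0) + Complex.I * fderiv ℝ c p (0, 1))

lemma dp_mul (hA : DifferentiableAt ℝ A p) (hB : DifferentiableAt ℝ B p) :
    dp (fun q => A q * B q) p = dp A p * B p + A p * dp B p := by
  unfold dp
  rw [fderiv_matmul hA hB, fderiv_matmul hA hB]
  simp only [Matrix.smul_mul, Matrix.mul_smul, smul_add, smul_sub, add_mul, mul_add,
    sub_mul, mul_sub, smul_smul]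
  module

lemma dm_mul (hA : DifferentiableAt ℝ A p) (hB : DifferentiableAt ℝ B p) :
    dm (fun q => A q * B q) p = dm A p * B p + A p * dm B p := by
  unfold dm
  rw [fderiv_matmul hA hB, fderiv_matmul hA hB]
  simp only [Matrix.smul_mul, Matrix.mul_smul, smul_add, smul_sub, add_mul, mul_add,
    sub_mul, mul_sub, smul_smul]
  module

lemma dp_add (hA : DifferentiableAt ℝ A p) (hB : DifferentiableAt ℝ B p) :
    dp (fun q => A q + B q) p = dp A p + dp B p := by
  unfold dp
  rw [show fderiv ℝ (fun q => A q + B q) p = fderiv ℝ A p + fderiv ℝ B p from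
    fderiv_fun_add hA hB]
  simp only [ContinuousLinearMap.add_apply]
  module

lemma dm_add (hA : DifferentiableAt ℝ A p) (hB : DifferentiableAt ℝ B p) :
    dm (fun q => A q + B q) p = dm A p + dm B p := by
  unfold dm
  rw [show fderiv ℝ (fun q => A q + B q) p = fderiv ℝ A p + fderiv ℝ B p from
    fderiv_fun_add hA hB]
  simp only [ContinuousLinearMap.add_apply]
  module

lemma dp_smul (hc : DifferentiableAt ℝ c p) (hA : DifferentiableAt ℝ A p) :
    dp (fun q => c q • A q) p = dpC c p • A p + c p • dp A p := by
  unfold dp dpC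
  rw [show fderiv ℝ (fun q => c q • A q) p
      = c p • fderiv ℝ A p + (fderiv ℝ c p).smulRight (A p) from fderiv_fun_smul hc hA]
  simp only [ContinuousLinearMap.add_apply, ContinuousLinearMap.coe_smul',
    Pi.smul_apply, ContinuousLinearMap.smulRight_apply]
  module

lemma dm_smul (hc : DifferentiableAt ℝ c p) (hA : DifferentiableAt ℝ A p) :
    dm (fun q => c q • A q) p = dmC c p • A p + c p • dm A p := by
  unfold dm dmC
  rw [show fderiv ℝ (fun q => c q • A q) p
      = c p • fderiv ℝ A p + (fderiv ℝ c p).smulRight (A p) from fderiv_fun_smul hc hA]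
  simp only [ContinuousLinearMap.add_apply, ContinuousLinearMap.coe_smul',
    Pi.smul_apply, ContinuousLinearMap.smulRight_apply]
  module

/-! ### Holomorphic and antiholomorphic scalar functions on `ℝ²` -/

/-- The ℝ-linear map `(x, y) ↦ x + y i`. -/
def eCLM : ℝ × ℝ →L[ℝ] ℂ :=
  Complex.ofRealCLM.comp (ContinuousLinearMap.fst ℝ ℝ ℝ) +
    (ContinuousLinearMap.snd ℝ ℝ ℝ).smulRight Complex.I

@[simp] lemma eCLM_apply (q : ℝ × ℝ) : eCLM q = (q.1 : ℂ) + (q.2 : ℂ) * Complex.I := by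
  simp [eCLM, Complex.real_smul]

variable {g : ℂ → ℂ}

lemma hasFDerivAt_G (hg : Differentiable ℂ g) (p : ℝ × ℝ) :
    HasFDerivAt (fun q : ℝ × ℝ => g ((q.1 : ℂ) + (q.2 : ℂ) * Complex.I))
      (((fderiv ℂ g (eCLM p)).restrictScalars ℝ).comp eCLM) p := by
  have h1 : HasFDerivAt g ((fderiv ℂ g (eCLM p)).restrictScalars ℝ) (eCLM p) :=
    (hg (eCLM p)).hasFDerivAt.restrictScalars ℝ
  have h2 : HasFDerivAt (fun q : ℝ × ℝ => g (eCLM q))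
      (((fderiv ℂ g (eCLM p)).restrictScalars ℝ).comp eCLM) p :=
    h1.comp p eCLM.hasFDerivAt
  convert h2 using 2
  simp

lemma fderiv_clin (hg : Differentiable ℂ g) : ∀ z w : ℂ, fderiv ℂ g z w = w * deriv g z := by
  intro z w
  calc fderiv ℂ g z w = fderiv ℂ g z (w • 1) := by simp
    _ = w • fderiv ℂ g z 1 := by rw [_root_.map_smul]
    _ = w * deriv g z := by rw [fderiv_apply_one_eq_deriv]; simp [smul_eq_mul]

lemma fderiv_C_apply (hg : Differentiable ℂ g) (p : ℝ × ℝ) (v : ℝ × ℝ) :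
    fderiv ℝ (fun q : ℝ × ℝ => g ((q.1 : ℂ) + (q.2 : ℂ) * Complex.I)) p v
      = ((v.1 : ℂ) + (v.2 : ℂ) * Complex.I) * deriv g ((p.1 : ℂ) + (p.2 : ℂ) * Complex.I) := by
  rw [(hasFDerivAt_G hg p).fderiv]
  simp [fderiv_clin hg]

lemma fderiv_Cbar_apply (hg : Differentiable ℂ g) (p : ℝ × ℝ) (v : ℝ × ℝ) :
    fderiv ℝ (fun q : ℝ × ℝ => (starRingEnd ℂ) (g ((q.1 : ℂ) + (q.2 : ℂ) * Complex.I))) p v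
      = (starRingEnd ℂ)
          (((v.1 : ℂ) + (v.2 : ℂ) * Complex.I)
            * deriv g ((p.1 : ℂ) + (p.2 : ℂ) * Complex.I)) := by
  have h := ((Complex.conjCLE : ℂ →L[ℝ] ℂ).hasFDerivAt.comp p (hasFDerivAt_G hg p))
  have h2 : fderiv ℝ
        (fun q : ℝ × ℝ => (starRingEnd ℂ) (g ((q.1 : ℂ) + (q.2 : ℂ) * Complex.I))) p
      = ((Complex.conjCLE : ℂ →L[ℝ] ℂ)).comp
          (((fderiv ℂ g (eCLM p)).restrictScalars ℝ).comp eCLM) := by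
    have := h.fderiv
    convert this using 2 <;> rfl
  rw [h2]
  simp [fderiv_clin hg]

lemma diff_G (hg : Differentiable ℂ g) (p : ℝ × ℝ) :
    DifferentiableAt ℝ (fun q : ℝ × ℝ => g ((q.1 : ℂ) + (q.2 : ℂ) * Complex.I)) p :=
  (hasFDerivAt_G hg p).differentiableAt

lemma diff_Gbar (hg : Differentiable ℂ g) (p : ℝ × ℝ) :
    DifferentiableAt ℝ
      (fun q : ℝ × ℝ => (starRingEnd ℂ) (g ((q.1 : ℂ) + (q.2 : ℂ) * Complex.I))) p :=
  ((Complex.conjCLE : ℂ →L[ℝ] ℂ).hasFDerivAt.comp p (hasFDerivAt_G hg p)).differentiableAt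

lemma dmC_G (hg : Differentiable ℂ g) (p : ℝ × ℝ) :
    dmC (fun q : ℝ × ℝ => g ((q.1 : ℂ) + (q.2 : ℂ) * Complex.I)) p = 0 := by
  unfold dmC
  rw [fderiv_C_apply hg, fderiv_C_apply hg]
  push_cast
  ring_nf
  simp [Complex.I_sq]
  try ring

lemma dpC_Gbar (hg : Differentiable ℂ g) (p : ℝ × ℝ) :
    dpC (fun q : ℝ × ℝ => (starRingEnd ℂ) (g ((q.1 : ℂ) + (q.2 : ℂ) * Complex.I))) p = 0 := by
  unfold dpC
  rw [fderiv_Cbar_apply hg, fderiv_Cbar_apply hg]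
  simp only [_root_.map_mul, _root_.map_add, Complex.conj_I, Complex.conj_ofReal]
  push_cast
  ring_nf
  simp [Complex.I_sq]
  try ring

/-! ### Differentiability of determinant, adjugate, inverse -/

lemma diffAt_finset_prod {ι : Type*} [DecidableEq ι] {s : Finset ι}
    {f : ι → ℝ × ℝ → ℂ} {p : ℝ × ℝ}
    (h : ∀ i ∈ s, DifferentiableAt ℝ (f i) p) :
    DifferentiableAt ℝ (fun q => ∏ i ∈ s, f i q) p := by
  classical
  induction s using Finset.induction with
  | empty => simp [differentiableAt_const]
  | insert _ _ hx ih =>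
      simp only [Finset.prod_insert hx]
      exact (h _ (Finset.mem_insert_self _ _)).mul
        (ih fun i hi => h i (Finset.mem_insert_of_mem hi))

lemma diffAt_det {A : ℝ × ℝ → Mat N} {p : ℝ × ℝ}
    (h : ∀ i j, DifferentiableAt ℝ (fun q => A q i j) p) :
    DifferentiableAt ℝ (fun q => (A q).det) p := by
  simp only [Matrix.det_apply']
  refine DifferentiableAt.fun_sum fun σ _ => ?_
  refine DifferentiableAt.const_mul ?_ _
  exact diffAt_finset_prod fun i _ => h _ _

lemma diffAt_inv {Phi : ℝ × ℝ → Mat N} {p : ℝ × ℝ}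
    (hPhi : DifferentiableAt ℝ Phi p) (hinv : IsUnit (Phi p)) :
    DifferentiableAt ℝ (fun q => (Phi q)⁻¹) p := by
  have hdet : DifferentiableAt ℝ (fun q => (Phi q).det) p :=
    diffAt_det fun i j => diffAt_entry hPhi i j
  have hne : (Phi p).det ≠ 0 :=
    ((Matrix.isUnit_iff_isUnit_det _).mp hinv).ne_zero
  have hadj : DifferentiableAt ℝ (fun q => (Phi q).adjugate) p := by
    refine differentiableAt_of_entries fun i j => ?_
    simp only [Matrix.adjugate_apply]
    refine diffAt_det fun k l => ?_
    simp only [Matrix.updateRow_apply]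
    rcases eq_or_ne k j with hkj | hkj
    · simp [hkj]
    · simpa [hkj] using diffAt_entry hPhi k l
  have : (fun q => (Phi q)⁻¹) = fun q => ((Phi q).det)⁻¹ • (Phi q).adjugate := by
    funext q; rw [Matrix.inv_def, Ring.inverse_eq_inv']
  rw [this]
  exact (hdet.inv hne).smul hadj

end ConfAux
/-- If `U¹, U²` (as functions of `ξ₊ = x + iy`, `ξ₋ = x − iy`) satisfy the zero-curvature
condition `∂₋U¹ − ∂₊U² + [U¹, U²] = 0`, `Φ` is an invertible solution of the linear spectral
problem `∂₊Φ = U¹Φ`, `∂₋Φ = U²Φ`, and `g` is holomorphic with conjugate `ḡ`, then the surface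
`F = Φ⁻¹·(g(ξ₊)U¹ + ḡ(ξ₋)U²)·Φ` associated with the conformal symmetry satisfies
`∂₊F = Φ⁻¹·(∂₊(gU¹) + ḡ∂₋U¹)·Φ` and `∂₋F = Φ⁻¹·(g∂₊U² + ∂₋(ḡU²))·Φ`. -/
theorem conformal_symmetry_surface {N : ℕ}
    (U1 U2 Phi : ℝ × ℝ → Matrix (Fin N) (Fin N) ℂ)
    (hU1 : ContDiff ℝ 1 U1) (hU2 : ContDiff ℝ 1 U2)
    (hPhi : ContDiff ℝ 1 Phi)
    (hZC : ∀ p, dm U1 p - dp U2 p + (U1 p * U2 p - U2 p * U1 p) = 0)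
    (hinv : ∀ p, IsUnit (Phi p))
    (hlsp1 : ∀ p, dp Phi p = U1 p * Phi p)
    (hlsp2 : ∀ p, dm Phi p = U2 p * Phi p)
    (g : ℂ → ℂ) (hg : Differentiable ℂ g)
    (G Gbar : ℝ × ℝ → ℂ)
    (hG : G = fun p => g ((p.1 : ℂ) + (p.2 : ℂ) * Complex.I))
    (hGbar : Gbar = fun p => (starRingEnd ℂ) (g ((p.1 : ℂ) + (p.2 : ℂ) * Complex.I)))
    (F : ℝ × ℝ → Matrix (Fin N) (Fin N) ℂ)
    (hF : F = fun p => (Phi p)⁻¹ * (G p • U1 p + Gbar p • U2 p) * Phi p) :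
    ∀ p, dp F p
        = (Phi p)⁻¹ * (dp (fun q => G q • U1 q) p + Gbar p • dm U1 p) * Phi p
      ∧ dm F p
        = (Phi p)⁻¹ * (G p • dp U2 p + dm (fun q => Gbar q • U2 q) p) * Phi p := by
  open ConfAux in
  intro p
  -- differentiability of the basic data
  have hU1d : ∀ q, DifferentiableAt ℝ U1 q := fun q => hU1.differentiable one_ne_zero q
  have hU2d : ∀ q, DifferentiableAt ℝ U2 q := fun q => hU2.differentiable one_ne_zero q
  have hPhid : ∀ q, DifferentiableAt ℝ Phi q := fun q => hPhi.differentiable one_ne_zero q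
  have hGd : ∀ q, DifferentiableAt ℝ G q := by rw [hG]; exact fun q => diff_G hg q
  have hGbard : ∀ q, DifferentiableAt ℝ Gbar q := by rw [hGbar]; exact fun q => diff_Gbar hg q
  have hInvd : ∀ q, DifferentiableAt ℝ (fun r => (Phi r)⁻¹) q :=
    fun q => diffAt_inv (hPhid q) (hinv q)
  have hdetp : IsUnit (Phi p).det := (Matrix.isUnit_iff_isUnit_det _).mp (hinv p)
  -- scalar Wirtinger facts
  have hdmCG : dmC G p = 0 := by rw [hG]; exact dmC_G hg p
  have hdpCGbar : dpC Gbar p = 0 := by rw [hGbar]; exact dpC_Gbar hg p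
  -- the derivative of the inverse
  have hmulInv : ∀ v, fderiv ℝ (fun r => (Phi r)⁻¹) p v
      = -((Phi p)⁻¹ * fderiv ℝ Phi p v * (Phi p)⁻¹) := by
    intro v
    have hc : (fun q => (Phi q)⁻¹ * Phi q) = fun _ => (1 : Matrix (Fin N) (Fin N) ℂ) :=
      funext fun q => Matrix.nonsing_inv_mul _ ((Matrix.isUnit_iff_isUnit_det _).mp (hinv q))
    have h0 : fderiv ℝ (fun q => (Phi q)⁻¹ * Phi q) p v = 0 := by
      rw [hc, fderiv_const_apply]; simp
    rw [fderiv_matmul (hInvd p) (hPhid p) v] at h0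
    have h1 : fderiv ℝ (fun r => (Phi r)⁻¹) p v * Phi p
        = -((Phi p)⁻¹ * fderiv ℝ Phi p v) := eq_neg_of_add_eq_zero_left h0
    calc fderiv ℝ (fun r => (Phi r)⁻¹) p v
        = fderiv ℝ (fun r => (Phi r)⁻¹) p v * (Phi p * (Phi p)⁻¹) := by
          rw [Matrix.mul_nonsing_inv _ hdetp, mul_one]
      _ = (fderiv ℝ (fun r => (Phi r)⁻¹) p v * Phi p) * (Phi p)⁻¹ := by rw [mul_assoc]
      _ = -((Phi p)⁻¹ * fderiv ℝ Phi p v) * (Phi p)⁻¹ := by rw [h1]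
      _ = -((Phi p)⁻¹ * fderiv ℝ Phi p v * (Phi p)⁻¹) := by rw [neg_mul]
  have hdpInv : dp (fun r => (Phi r)⁻¹) p = -((Phi p)⁻¹ * U1 p) := by
    have e1 : dp (fun r => (Phi r)⁻¹) p = -((Phi p)⁻¹ * dp Phi p * (Phi p)⁻¹) := by
      unfold dp
      rw [hmulInv, hmulInv]
      simp only [Matrix.mul_smul, Matrix.smul_mul, smul_add, smul_sub, mul_add, mul_sub,
        add_mul, sub_mul, neg_mul, mul_neg, smul_neg]
      module
    rw [e1, hlsp1 p, mul_assoc, mul_assoc, Matrix.mul_nonsing_inv _ hdetp, mul_one]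
  have hdmInv : dm (fun r => (Phi r)⁻¹) p = -((Phi p)⁻¹ * U2 p) := by
    have e1 : dm (fun r => (Phi r)⁻¹) p = -((Phi p)⁻¹ * dm Phi p * (Phi p)⁻¹) := by
      unfold dm
      rw [hmulInv, hmulInv]
      simp only [Matrix.mul_smul, Matrix.smul_mul, smul_add, smul_sub, mul_add, mul_sub,
        add_mul, sub_mul, neg_mul, mul_neg, smul_neg]
      module
    rw [e1, hlsp2 p, mul_assoc, mul_assoc, Matrix.mul_nonsing_inv _ hdetp, mul_one]
  -- differentiability of the pieces of F
  have hd1 : DifferentiableAt ℝ (fun q => G q • U1 q) p := (hGd p).smul (hU1d p)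
  have hd2 : DifferentiableAt ℝ (fun q => Gbar q • U2 q) p := (hGbard p).smul (hU2d p)
  have hM : DifferentiableAt ℝ (fun q => G q • U1 q + Gbar q • U2 q) p := hd1.add hd2
  have hIM : DifferentiableAt ℝ (fun q => (Phi q)⁻¹ * (G q • U1 q + Gbar q • U2 q)) p :=
    diffAt_matmul (hInvd p) hM
  -- zero-curvature rearranged
  have hz1 : dm U1 p = dp U2 p - (U1 p * U2 p - U2 p * U1 p) := by
    have h := hZC p
    have h2 : dm U1 p - (dp U2 p - (U1 p * U2 p - U2 p * U1 p)) = 0 := by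
      rw [← h]; abel
    exact sub_eq_zero.mp h2
  have hz2 : dp U2 p = dm U1 p + (U1 p * U2 p - U2 p * U1 p) := by
    rw [hz1]; abel
  subst hF
  constructor
  · -- ∂₊ part
    rw [dp_mul hIM (hPhid p), dp_mul (hInvd p) hM, dp_add hd1 hd2,
      dp_smul (hGbard p) (hU2d p), hdpCGbar, hdpInv, hlsp1 p, hz1]
    simp only [zero_smul, zero_add, mul_add, add_mul, mul_sub, sub_mul,
      Matrix.smul_mul, Matrix.mul_smul, smul_sub, smul_add, neg_mul, mul_neg, mul_assoc]
    module
  · -- ∂₋ part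
    rw [dm_mul hIM (hPhid p), dm_mul (hInvd p) hM, dm_add hd1 hd2,
      dm_smul (hGd p) (hU1d p), hdmCG, hdmInv, hlsp2 p, hz2]
    simp only [zero_smul, zero_add, mul_add, add_mul, mul_sub, sub_mul,
      Matrix.smul_mul, Matrix.mul_smul, smul_sub, smul_add, neg_mul, mul_neg, mul_assoc]
    module
end
end
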